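/- Let G = (V,E) be a graph and C ⊆ V a cluster of size at least 2 such that every vertex of C has at least |C|/2 neighbors in C. Then for every non-edge (x,y) with x,y ∈ C, there exist at least two vertices z ∈ C such that both (x,z) and (y,z) are edges; consequently the number of non-edges inside C is at most half the number of bad triangles inside C. -/

import Mathlib

/-- In a cluster `C` in which every vertex has at least `|C|/2` neighbors within `C`,
every non-edge of `C` has at least two common neighbors in `C`; consequently the number of
non-edges inside `C` is at most half the number of bad triangles inside `C`.
(Non-edges are counted as ordered pairs and bad triangles as ordered triples, so the
unordered inequality `N ≤ B/2` becomes `6·N_ordered ≤ B_ordered`.) -/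
theorem nonedges_le_half_badTriangles {V : Type*} [DecidableEq V] (G : SimpleGraph V)
    [DecidableRel G.Adj] (C : Finset V) (hC : 2 ≤ C.card)
    (hdeg : ∀ x ∈ C, ((C.card : ℝ) / 2 ≤ ((C.filter (fun y => G.Adj x y)).card : ℝ))) :
    (∀ x ∈ C, ∀ y ∈ C, x ≠ y → ¬ G.Adj x y →
      2 ≤ (C.filter (fun z => G.Adj x z ∧ G.Adj y z)).card) ∧
    6 * ((C ×ˢ C).filter (fun p => p.1 ≠ p.2 ∧ ¬ G.Adj p.1 p.2)).card ≤
      ((C ×ˢ C ×ˢ C).filter (fun t =>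
        t.1 ≠ t.2.1 ∧ t.2.1 ≠ t.2.2 ∧ t.1 ≠ t.2.2 ∧
        ((if G.Adj t.1 t.2.1 then 1 else 0) + (if G.Adj t.2.1 t.2.2 then 1 else 0) +
          (if G.Adj t.2.2 t.1 then 1 else 0) = (2 : ℕ)))).card := by
  -- Part 1
  have part1 : ∀ x ∈ C, ∀ y ∈ C, x ≠ y → ¬ G.Adj x y →
      2 ≤ (C.filter (fun z => G.Adj x z ∧ G.Adj y z)).card := by
    intro x hx y hy hxy hnadj
    set A := C.filter (fun z => G.Adj x z) with hA
    set B := C.filter (fun z => G.Adj y z) with hB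
    have hinter : C.filter (fun z => G.Adj x z ∧ G.Adj y z) = A ∩ B := by
      ext z; simp [hA, hB, Finset.mem_filter, and_assoc]; tauto
    have hAB : C.card ≤ A.card + B.card := by
      have h1 := hdeg x hx
      have h2 := hdeg y hy
      have : (C.card : ℝ) ≤ (A.card : ℝ) + B.card := by linarith
      exact_mod_cast this
    have hsub : A ∪ B ⊆ C \ {x, y} := by
      intro z hz
      simp only [hA, hB, Finset.mem_union, Finset.mem_filter] at hz
      simp only [Finset.mem_sdiff, Finset.mem_insert, Finset.mem_singleton]
      rcases hz with ⟨hzC, hadj⟩ | ⟨hzC, hadj⟩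
      · refine ⟨hzC, ?_⟩
        rintro (rfl | rfl)
        · exact G.loopless.irrefl _ hadj
        · exact hnadj hadj
      · refine ⟨hzC, ?_⟩
        rintro (rfl | rfl)
        · exact hnadj (hadj.symm)
        · exact G.loopless.irrefl _ hadj
    have hcard_sdiff : (C \ {x, y}).card = C.card - 2 := by
      rw [Finset.card_sdiff_of_subset]
      · simp [Finset.card_insert_of_notMem, hxy]
      · intro z hz
        simp only [Finset.mem_insert, Finset.mem_singleton] at hz
        rcases hz with rfl | rfl <;> assumption
    have hU : (A ∪ B).card ≤ C.card - 2 := by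
      rw [← hcard_sdiff]; exact Finset.card_le_card hsub
    have hkey := Finset.card_union_add_card_inter A B
    rw [hinter]
    omega
  refine ⟨part1, ?_⟩
  set NE := (C ×ˢ C).filter (fun p => p.1 ≠ p.2 ∧ ¬ G.Adj p.1 p.2) with hNE
  set T3 := (C ×ˢ C ×ˢ C).filter (fun t : V × V × V =>
      t.1 ≠ t.2.1 ∧ t.2.1 ≠ t.2.2 ∧ t.1 ≠ t.2.2 ∧
      G.Adj t.1 t.2.1 ∧ G.Adj t.2.1 t.2.2 ∧ ¬ G.Adj t.2.2 t.1) with hT3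
  set T1 := (C ×ˢ C ×ˢ C).filter (fun t : V × V × V =>
      t.1 ≠ t.2.1 ∧ t.2.1 ≠ t.2.2 ∧ t.1 ≠ t.2.2 ∧
      ¬ G.Adj t.1 t.2.1 ∧ G.Adj t.2.1 t.2.2 ∧ G.Adj t.2.2 t.1) with hT1
  set T2 := (C ×ˢ C ×ˢ C).filter (fun t : V × V × V =>
      t.1 ≠ t.2.1 ∧ t.2.1 ≠ t.2.2 ∧ t.1 ≠ t.2.2 ∧
      G.Adj t.1 t.2.1 ∧ ¬ G.Adj t.2.1 t.2.2 ∧ G.Adj t.2.2 t.1) with hT2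
  -- Step A : 2 * NE.card ≤ T3.card
  have hbi : T3 = NE.biUnion (fun p =>
      (C.filter (fun z => G.Adj p.1 z ∧ G.Adj p.2 z)).image (fun z => (p.1, z, p.2))) := by
    ext t
    simp only [hT3, hNE, Finset.mem_filter, Finset.mem_biUnion, Finset.mem_image,
      Finset.mem_product]
    constructor
    · rintro ⟨⟨h1, h2, h3⟩, hne1, hne2, hne3, ha1, ha2, hna⟩
      refine ⟨(t.1, t.2.2), ⟨⟨h1, h3⟩, hne3, fun h => hna h.symm⟩, t.2.1, ⟨h2, ha1, ha2.symm⟩, ?_⟩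
      simp
    · rintro ⟨p, ⟨⟨hp1, hp2⟩, hpne, hpnadj⟩, z, ⟨hzC, haz1, haz2⟩, rfl⟩
      exact ⟨⟨hp1, hzC, hp2⟩, haz1.ne, haz2.ne', hpne,
        haz1, haz2.symm, fun h => hpnadj h.symm⟩
  have hA : 2 * NE.card ≤ T3.card := by
    rw [hbi, Finset.card_biUnion]
    · calc 2 * NE.card = ∑ _p ∈ NE, 2 := by
            rw [Finset.sum_const, smul_eq_mul, mul_comm]
          _ ≤ ∑ p ∈ NE, ((C.filter (fun z => G.Adj p.1 z ∧ G.Adj p.2 z)).image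
                (fun z => (p.1, z, p.2))).card := by
            apply Finset.sum_le_sum
            intro p hp
            rw [Finset.card_image_of_injective _
              (fun a b h => congrArg (fun t : V × V × V => t.2.1) h)]
            simp only [hNE, Finset.mem_filter, Finset.mem_product] at hp
            exact part1 p.1 hp.1.1 p.2 hp.1.2 hp.2.1 hp.2.2
    · intro p hp q hq hpq
      simp only [Finset.disjoint_left, Finset.mem_image]
      rintro t ⟨z, _, rfl⟩ ⟨w, _, hw⟩
      apply hpq
      have h3' : q.2 = p.2 := congrArg (fun t : V × V × V => t.2.2) hw
      have h1' : q.1 = p.1 := congrArg (fun t : V × V × V => t.1) hw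
      exact Prod.ext h1'.symm h3'.symm
  -- Step B : cards of T1 T2 T3 equal
  have hc1 : T1.card = T3.card := by
    refine Finset.card_bij' (fun t _ => (t.2.1, t.2.2, t.1)) (fun t _ => (t.2.2, t.1, t.2.1))
      ?_ ?_ (fun a ha => rfl) (fun a ha => rfl)
    · intro t ht
      simp only [hT1, Finset.mem_filter, Finset.mem_product] at ht
      simp only [hT3, Finset.mem_filter, Finset.mem_product]
      obtain ⟨⟨c1, c2, c3⟩, n1, n2, n3, a1, a2, a3⟩ := ht
      exact ⟨⟨c2, c3, c1⟩, n2, n3.symm, fun h => n1 h.symm, a2, a3, a1⟩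
    · intro t ht
      simp only [hT3, Finset.mem_filter, Finset.mem_product] at ht
      simp only [hT1, Finset.mem_filter, Finset.mem_product]
      obtain ⟨⟨c1, c2, c3⟩, n1, n2, n3, a1, a2, a3⟩ := ht
      exact ⟨⟨c3, c1, c2⟩, fun h => n3 h.symm, n1, fun h => n2 h.symm, a3, a1, a2⟩
  have hc2 : T2.card = T3.card := by
    refine Finset.card_bij' (fun t _ => (t.2.2, t.1, t.2.1)) (fun t _ => (t.2.1, t.2.2, t.1))
      ?_ ?_ (fun a ha => rfl) (fun a ha => rfl)
    · intro t ht
      simp only [hT2, Finset.mem_filter, Finset.mem_product] at ht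
      simp only [hT3, Finset.mem_filter, Finset.mem_product]
      obtain ⟨⟨c1, c2, c3⟩, n1, n2, n3, a1, a2, a3⟩ := ht
      exact ⟨⟨c3, c1, c2⟩, fun h => n3 h.symm, n1, fun h => n2 h.symm, a3, a1, a2⟩
    · intro t ht
      simp only [hT3, Finset.mem_filter, Finset.mem_product] at ht
      simp only [hT2, Finset.mem_filter, Finset.mem_product]
      obtain ⟨⟨c1, c2, c3⟩, n1, n2, n3, a1, a2, a3⟩ := ht
      exact ⟨⟨c2, c3, c1⟩, n2, n3.symm, fun h => n1 h.symm, a2, a3, a1⟩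
  -- Step C : the big set equals T1 ∪ T2 ∪ T3
  have hunion : ((C ×ˢ C ×ˢ C).filter (fun t =>
        t.1 ≠ t.2.1 ∧ t.2.1 ≠ t.2.2 ∧ t.1 ≠ t.2.2 ∧
        ((if G.Adj t.1 t.2.1 then 1 else 0) + (if G.Adj t.2.1 t.2.2 then 1 else 0) +
          (if G.Adj t.2.2 t.1 then 1 else 0) = (2 : ℕ)))) = T1 ∪ T2 ∪ T3 := by
    ext t
    simp only [hT1, hT2, hT3, Finset.mem_union, Finset.mem_filter, Finset.mem_product]
    by_cases a : G.Adj t.1 t.2.1 <;> by_cases b : G.Adj t.2.1 t.2.2 <;>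
      by_cases c : G.Adj t.2.2 t.1 <;> simp [a, b, c]
  have hd12 : Disjoint T1 T2 := by
    rw [Finset.disjoint_left]
    simp only [hT1, hT2, Finset.mem_filter]
    rintro t ⟨_, _, _, _, hna, _, _⟩ ⟨_, _, _, _, ha, _, _⟩
    exact hna ha
  have hd13 : Disjoint T1 T3 := by
    rw [Finset.disjoint_left]
    simp only [hT1, hT3, Finset.mem_filter]
    rintro t ⟨_, _, _, _, hna, _, _⟩ ⟨_, _, _, _, ha, _, _⟩
    exact hna ha
  have hd23 : Disjoint T2 T3 := by
    rw [Finset.disjoint_left]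
    simp only [hT2, hT3, Finset.mem_filter]
    rintro t ⟨_, _, _, _, _, hna, _⟩ ⟨_, _, _, _, _, ha, _⟩
    exact hna ha
  have hd3 : Disjoint (T1 ∪ T2) T3 := Finset.disjoint_union_left.mpr ⟨hd13, hd23⟩
  rw [hunion, Finset.card_union_of_disjoint hd3, Finset.card_union_of_disjoint hd12, hc1, hc2]
  omega
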